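/- Let A be a symmetric positive semidefinite d×d real matrix with all diagonal entries equal to 1, and let Q be a d×d real matrix with zero diagonal satisfying the modified skew-symmetry condition q_{jr} + q_{rj} = 2 a_{rj} for all r ≠ j. Suppose 2A − I − Q is invertible and set δ = (2A − I − Q)^{-1} μ for μ ∈ ℝ^d. Let U : ℝ → ℝ be C² and define p(x) = exp{2(Σ_{j=1}^d U(x_j) − δ·x)}. Then the formal adjoint of G = ½ ∇·(A∇) + Ω·∇, where Ω(x) = Σ_j U'(x_j)(e_j + q_j) − μ, annihilates p: G* p = 0 on ℝ^d. -/

import Mathlib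

/-- Partial derivative in direction `i`. -/
noncomputable def pd {d : ℕ} (f : (Fin d → ℝ) → ℝ) (i : Fin d) (x : Fin d → ℝ) : ℝ :=
  fderiv ℝ f x (Pi.single i 1)

/-- Laplacian. -/
noncomputable def lap {d : ℕ} (f : (Fin d → ℝ) → ℝ) (x : Fin d → ℝ) : ℝ :=
  ∑ i, pd (pd f i) i x

/-- Dot product on `Fin d → ℝ`. -/
def dot {d : ℕ} (u v : Fin d → ℝ) : ℝ := ∑ i, u i * v i

section auxcalc
variable {d : ℕ} (δ : Fin d → ℝ) (U : ℝ → ℝ)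

lemma aux_coord (hU : Differentiable ℝ U) (l : Fin d) (x : Fin d → ℝ) :
    HasFDerivAt (fun y : Fin d → ℝ => U (y l))
      ((deriv U (x l)) • (ContinuousLinearMap.proj l : (Fin d → ℝ) →L[ℝ] ℝ)) x :=
  (hU.differentiableAt.hasDerivAt).comp_hasFDerivAt x (hasFDerivAt_apply l x)

lemma aux_g (hU : Differentiable ℝ U) (x : Fin d → ℝ) :
    HasFDerivAt (fun y : Fin d → ℝ => 2 * ((∑ l, U (y l)) - dot δ y))
      ((2:ℝ) • (∑ l, ((deriv U (x l) - δ l)) • (ContinuousLinearMap.proj l : (Fin d → ℝ) →L[ℝ] ℝ))) x := by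
  have h1 : HasFDerivAt (fun y : Fin d → ℝ => ∑ l, U (y l))
      (∑ l, (deriv U (x l)) • (ContinuousLinearMap.proj l : (Fin d → ℝ) →L[ℝ] ℝ)) x :=
    HasFDerivAt.fun_sum (fun l _ => aux_coord U hU l x)
  have h2 : HasFDerivAt (fun y : Fin d → ℝ => dot δ y)
      (∑ l, (δ l) • (ContinuousLinearMap.proj l : (Fin d → ℝ) →L[ℝ] ℝ)) x := by
    have heq : (fun y : Fin d → ℝ => dot δ y)
        = ⇑(∑ l, (δ l) • (ContinuousLinearMap.proj l : (Fin d → ℝ) →L[ℝ] ℝ)) := by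
      ext y
      simp [dot, ContinuousLinearMap.sum_apply]
    rw [heq]
    exact ContinuousLinearMap.hasFDerivAt _
  have h3 := (h1.sub h2).const_mul (2:ℝ)
  have hmap : (∑ l, ((deriv U (x l) - δ l)) • (ContinuousLinearMap.proj l : (Fin d → ℝ) →L[ℝ] ℝ))
      = (∑ l, (deriv U (x l)) • (ContinuousLinearMap.proj l : (Fin d → ℝ) →L[ℝ] ℝ))
        - ∑ l, (δ l) • (ContinuousLinearMap.proj l : (Fin d → ℝ) →L[ℝ] ℝ) := by
    ext v
    simp [ContinuousLinearMap.sum_apply, sub_mul, Finset.sum_sub_distrib]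
  rw [hmap]
  exact h3

lemma aux_p (hU : Differentiable ℝ U) (x : Fin d → ℝ) :
    HasFDerivAt (fun y : Fin d → ℝ => Real.exp (2 * ((∑ l, U (y l)) - dot δ y)))
      ((Real.exp (2 * ((∑ l, U (x l)) - dot δ x))) •
        ((2:ℝ) • (∑ l, ((deriv U (x l) - δ l)) • (ContinuousLinearMap.proj l : (Fin d → ℝ) →L[ℝ] ℝ)))) x :=
  (Real.hasDerivAt_exp _).comp_hasFDerivAt x (aux_g δ U hU x)

lemma pd_p (hU : Differentiable ℝ U) (i : Fin d) (x : Fin d → ℝ) :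
    pd (fun y : Fin d → ℝ => Real.exp (2 * ((∑ l, U (y l)) - dot δ y))) i x
      = Real.exp (2 * ((∑ l, U (x l)) - dot δ x)) * (2 * (deriv U (x i) - δ i)) := by
  rw [pd, (aux_p δ U hU x).fderiv]
  simp [ContinuousLinearMap.sum_apply, Pi.single_apply, Finset.sum_ite_eq']

lemma pd_pd_p (hU : Differentiable ℝ U) (hU' : Differentiable ℝ (deriv U))
    (i j : Fin d) (x : Fin d → ℝ) :
    pd (pd (fun y : Fin d → ℝ => Real.exp (2 * ((∑ l, U (y l)) - dot δ y))) j) i x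
      = Real.exp (2 * ((∑ l, U (x l)) - dot δ x)) *
        (2 * deriv (deriv U) (x j) * (if j = i then (1:ℝ) else 0)
          + 4 * (deriv U (x j) - δ j) * (deriv U (x i) - δ i)) := by
  have hrw : pd (fun y : Fin d → ℝ => Real.exp (2 * ((∑ l, U (y l)) - dot δ y))) j
      = fun z => (2 * (deriv U (z j) - δ j)) *
          Real.exp (2 * ((∑ l, U (z l)) - dot δ z)) := by
    funext z
    rw [pd_p δ U hU j z]
    ring
  rw [pd, hrw]
  have h1 : HasFDerivAt (fun z : Fin d → ℝ => 2 * (deriv U (z j) - δ j))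
      ((2 * deriv (deriv U) (x j)) • (ContinuousLinearMap.proj j : (Fin d → ℝ) →L[ℝ] ℝ)) x := by
    have := ((aux_coord (deriv U) hU' j x).sub_const (δ j)).const_mul (2:ℝ)
    simpa [smul_smul] using this
  have hprod := h1.fun_mul (aux_p δ U hU x)
  rw [hprod.fderiv]
  simp [ContinuousLinearMap.sum_apply, Pi.single_apply, Finset.sum_ite_eq']
  by_cases h : j = i <;> simp [h] <;> ring

lemma pd_drift (μ : Fin d → ℝ) (Q : Matrix (Fin d) (Fin d) ℝ) (hU' : Differentiable ℝ (deriv U))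
    (i : Fin d) (x : Fin d → ℝ) :
    pd (fun y : Fin d → ℝ => deriv U (y i) + (∑ j, deriv U (y j) * Q j i) - μ i) i x
      = deriv (deriv U) (x i) + deriv (deriv U) (x i) * Q i i := by
  have h1 : HasFDerivAt
      (fun y : Fin d → ℝ => deriv U (y i) + (∑ j, deriv U (y j) * Q j i) - μ i)
      (((deriv (deriv U) (x i)) • (ContinuousLinearMap.proj i : (Fin d → ℝ) →L[ℝ] ℝ))
        + ∑ j, (Q j i) • ((deriv (deriv U) (x j)) • (ContinuousLinearMap.proj j : (Fin d → ℝ) →L[ℝ] ℝ))) x := by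
    have hsum : HasFDerivAt (fun y : Fin d → ℝ => ∑ j, deriv U (y j) * Q j i)
        (∑ j, (Q j i) • ((deriv (deriv U) (x j)) • (ContinuousLinearMap.proj j : (Fin d → ℝ) →L[ℝ] ℝ))) x := by
      refine HasFDerivAt.fun_sum (fun j _ => ?_)
      have := (aux_coord (deriv U) hU' j x).mul_const (Q j i)
      simpa [smul_smul, mul_comm] using this
    exact ((aux_coord (deriv U) hU' i x).add hsum).sub_const (μ i)
  rw [pd, h1.fderiv]
  simp [ContinuousLinearMap.sum_apply, Pi.single_apply, Finset.sum_ite_eq', mul_comm]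

end auxcalc

lemma key_algebra (d : ℕ) (A Q : Matrix (Fin d) (Fin d) ℝ) (μ δ : Fin d → ℝ) (v : Fin d → ℝ)
    (hAsymm : ∀ i j, A i j = A j i)
    (hAdiag : ∀ i, A i i = 1)
    (hQdiag : ∀ i, Q i i = 0)
    (hskew : ∀ j r, j ≠ r → Q j r + Q r j = 2 * A r j)
    (hδ : ∀ i, (∑ j, (2 * A i j - (if i = j then (1:ℝ) else 0) - Q i j) * δ j) = μ i) :
    ∑ i, ∑ j, A i j * v j * v i
      = ∑ i, ((v i + δ i) + (∑ j, (v j + δ j) * Q j i) - μ i) * v i := by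
  have hQsum : ∀ i j, Q i j + Q j i = 2 * A i j - 2 * (if i = j then (1:ℝ) else 0) := by
    intro i j
    by_cases h : i = j
    · subst h; simp [hQdiag, hAdiag]
    · rw [hskew i j h, hAsymm j i]; simp [h]
  set F : Fin d → Fin d → ℝ := fun i j =>
    A i j * v i * v j - (if i = j then (1:ℝ) else 0) * ((v j + δ j) * v i)
      - (v j + δ j) * Q j i * v i
      + (2 * A i j - (if i = j then (1:ℝ) else 0) - Q i j) * δ j * v i with hF
  have hanti : ∀ i j, F i j + F j i = 0 := by
    intro i j
    have hq := hQsum i j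
    have ha : A j i = A i j := hAsymm j i
    simp only [hF]
    rw [ha]
    by_cases h : i = j
    · subst h
      simp only [eq_self_iff_true, if_true] at hq ⊢
      linear_combination (-(v i * v i + δ i * v i + δ i * v i)) * hq
    · have h' : ¬ j = i := fun hh => h hh.symm
      simp only [if_neg h, if_neg h'] at hq ⊢
      linear_combination (-(v i * v j + δ j * v i + δ i * v j)) * hq
  have hFzero : ∑ i, ∑ j, F i j = 0 := by
    have hcomm : ∑ i, ∑ j, F i j = ∑ i, ∑ j, F j i := Finset.sum_comm
    have : (∑ i, ∑ j, F i j) + (∑ i, ∑ j, F i j) = 0 := by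
      nth_rewrite 2 [hcomm]
      rw [← Finset.sum_add_distrib]
      simp only [← Finset.sum_add_distrib]
      exact Finset.sum_eq_zero (fun i _ => Finset.sum_eq_zero (fun j _ => hanti i j))
    linarith
  have hpt : ∀ i, ((v i + δ i) + (∑ j, (v j + δ j) * Q j i) - μ i) * v i
      = ∑ j, (A i j * v j * v i - F i j) := by
    intro i
    rw [← hδ i]
    have h1 : (v i + δ i) = ∑ j, (if i = j then (1:ℝ) else 0) * ((v j + δ j)) := by
      simp [Finset.sum_ite_eq]
    rw [h1]
    rw [show ((∑ j, (if i = j then (1:ℝ) else 0) * (v j + δ j))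
        + (∑ j, (v j + δ j) * Q j i)
        - (∑ j, (2 * A i j - (if i = j then (1:ℝ) else 0) - Q i j) * δ j)) * v i
      = (∑ j, ((if i = j then (1:ℝ) else 0) * (v j + δ j)) * v i)
        + (∑ j, ((v j + δ j) * Q j i) * v i)
        - (∑ j, ((2 * A i j - (if i = j then (1:ℝ) else 0) - Q i j) * δ j) * v i) from by
        rw [← Finset.sum_mul, ← Finset.sum_mul, ← Finset.sum_mul]; ring]
    rw [← Finset.sum_add_distrib, ← Finset.sum_sub_distrib]
    refine Finset.sum_congr rfl (fun j _ => ?_)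
    simp only [hF]
    ring
  symm
  calc ∑ i, ((v i + δ i) + (∑ j, (v j + δ j) * Q j i) - μ i) * v i
      = ∑ i, ∑ j, (A i j * v j * v i - F i j) :=
        Finset.sum_congr rfl (fun i _ => hpt i)
    _ = (∑ i, ∑ j, A i j * v j * v i) - ∑ i, ∑ j, F i j := by
        simp [Finset.sum_sub_distrib]
    _ = ∑ i, ∑ j, A i j * v j * v i := by rw [hFzero, sub_zero]

theorem stmt_6 (d : ℕ) (A Q : Matrix (Fin d) (Fin d) ℝ) (μ δ : Fin d → ℝ)
    (hAsymm : ∀ i j, A i j = A j i)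
    (hApsd : ∀ c : Fin d → ℝ, 0 ≤ ∑ i, ∑ j, c i * A i j * c j)
    (hAdiag : ∀ i, A i i = 1)
    (hQdiag : ∀ i, Q i i = 0)
    (hskew : ∀ j r, j ≠ r → Q j r + Q r j = 2 * A r j)
    (hδ : ∀ i, (∑ j, (2 * A i j - (if i = j then (1:ℝ) else 0) - Q i j) * δ j) = μ i)
    (U : ℝ → ℝ) (hU : ContDiff ℝ 2 U) :
    ∀ x : Fin d → ℝ,
      (1/2) * (∑ i, ∑ j, A i j *
          pd (pd (fun y => Real.exp (2 * ((∑ l, U (y l)) - dot δ y))) j) i x)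
      - dot (fun i => deriv U (x i) + (∑ j, deriv U (x j) * Q j i) - μ i)
          (fun i => pd (fun y => Real.exp (2 * ((∑ l, U (y l)) - dot δ y))) i x)
      - (∑ i, pd (fun y => deriv U (y i) + (∑ j, deriv U (y j) * Q j i) - μ i) i x)
          * Real.exp (2 * ((∑ l, U (x l)) - dot δ x)) = 0 := by
  intro x
  have hUd : Differentiable ℝ U := hU.differentiable (by norm_num)
  have hU1 : ContDiff ℝ 1 (deriv U) := by
    have h2 : (2 : WithTop ℕ∞) = 1 + 1 := by norm_num
    rw [h2, contDiff_succ_iff_deriv] at hU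
    exact hU.2.2
  have hU'd : Differentiable ℝ (deriv U) := hU1.differentiable one_ne_zero
  set e : ℝ := Real.exp (2 * ((∑ l, U (x l)) - dot δ x)) with he
  set v : Fin d → ℝ := fun i => deriv U (x i) - δ i with hv
  set w : Fin d → ℝ := fun i => deriv (deriv U) (x i) with hw
  have key := key_algebra d A Q μ δ v hAsymm hAdiag hQdiag hskew hδ
  have hvδ : ∀ i, v i + δ i = deriv U (x i) := fun i => by simp [hv]
  simp only [hvδ] at key
  -- rewrite the derivatives
  rw [show (∑ i, ∑ j, A i j *
        pd (pd (fun y => Real.exp (2 * ((∑ l, U (y l)) - dot δ y))) j) i x)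
      = ∑ i, ∑ j, A i j * (e * (2 * w j * (if j = i then (1:ℝ) else 0) + 4 * v j * v i)) from
    Finset.sum_congr rfl fun i _ => Finset.sum_congr rfl fun j _ => by
      rw [pd_pd_p δ U hUd hU'd i j x]]
  rw [show dot (fun i => deriv U (x i) + (∑ j, deriv U (x j) * Q j i) - μ i)
        (fun i => pd (fun y => Real.exp (2 * ((∑ l, U (y l)) - dot δ y))) i x)
      = ∑ i, (deriv U (x i) + (∑ j, deriv U (x j) * Q j i) - μ i) * (e * (2 * v i)) from by
    rw [dot]
    exact Finset.sum_congr rfl fun i _ => by rw [pd_p δ U hUd i x]]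
  rw [show (∑ i, pd (fun y => deriv U (y i) + (∑ j, deriv U (y j) * Q j i) - μ i) i x)
      = ∑ i, w i from Finset.sum_congr rfl fun i _ => by
    rw [pd_drift U μ Q hU'd i x, hQdiag]; simp [hw]]
  -- simplify the double sum
  have h1 : ∀ i, ∑ j, A i j * (e * (2 * w j * (if j = i then (1:ℝ) else 0) + 4 * v j * v i))
      = 2 * e * w i + 4 * e * ∑ j, A i j * v j * v i := by
    intro i
    have hterm : ∀ j, A i j * (e * (2 * w j * (if j = i then (1:ℝ) else 0) + 4 * v j * v i))
        = (if j = i then 2 * e * w j else 0) + 4 * e * (A i j * v j * v i) := by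
      intro j
      by_cases h : j = i
      · subst h; simp only [eq_self_iff_true, if_true, hAdiag]; ring
      · simp only [if_neg h]; ring
    rw [Finset.sum_congr rfl fun j _ => hterm j, Finset.sum_add_distrib,
      Finset.sum_ite_eq' Finset.univ i, ← Finset.mul_sum]
    simp
  rw [Finset.sum_congr rfl fun i _ => h1 i, Finset.sum_add_distrib, ← Finset.mul_sum,
    ← Finset.mul_sum]
  have h2 : ∑ i, (deriv U (x i) + (∑ j, deriv U (x j) * Q j i) - μ i) * (e * (2 * v i))
      = 2 * e * ∑ i, (deriv U (x i) + (∑ j, deriv U (x j) * Q j i) - μ i) * v i := by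
    rw [Finset.mul_sum]
    exact Finset.sum_congr rfl fun i _ => by ring
  rw [h2, ← key]
  ring
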